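/- Let G be a finite nilpotent OC-group with 1 < Z(G) < G. Then the normal 2-complement H of G is abelian, so G = P × H where P is a non-abelian Sylow 2-subgroup of G; moreover P is itself a non-trivial OC-group. -/

import Mathlib

/-- **Claim 1 in Lemma 2.6.** Let `G` be a finite nilpotent OC-group
with `1 < Z(G) < G`, and let `H` be its normal 2-complement (the subgroup of elements
of odd order).  Then `H` is abelian, `G = P × H` for a non-abelian Sylow 2-subgroup
`P`, and `P` is itself a non-trivial OC-group. -/
theorem nilpotent_oc_group_structure (G : Type) [Group G] [Finite G]
    (hnilp : Group.IsNilpotent G)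
    (hOC : ∀ x y : G, x ∉ Subgroup.center G → y ∉ Subgroup.center G →
      orderOf x = orderOf y → IsConj x y)
    (h1 : ⊥ < Subgroup.center G) (h2 : Subgroup.center G < ⊤)
    (H : Subgroup G) (hHnormal : H.Normal)
    (hH : ∀ x : G, x ∈ H ↔ Odd (orderOf x)) :
    (∀ a b : H, a * b = b * a) ∧
    ∃ P : Sylow 2 G,
      (¬ ∀ a b : (P : Subgroup G), a * b = b * a) ∧
      (P : Subgroup G).Normal ∧
      (P : Subgroup G).IsComplement' H ∧
      (∀ x y : (P : Subgroup G),
        x ∉ Subgroup.center (P : Subgroup G) → y ∉ Subgroup.center (P : Subgroup G) →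
        orderOf x = orderOf y → IsConj x y) ∧
      ⊥ < Subgroup.center (P : Subgroup G) ∧
      Subgroup.center (P : Subgroup G) < ⊤ := by
  classical
  haveI hp2 : Fact (Nat.Prime 2) := ⟨Nat.prime_two⟩
  -- all Sylow subgroups are normal
  have hsyl : ∀ (p : ℕ) (_ : Fact p.Prime) (Q : Sylow p G), (Q : Subgroup G).Normal :=
    ((isNilpotent_of_finite_tfae (G := G)).out 0 3).mp hnilp
  obtain ⟨P⟩ : Nonempty (Sylow 2 G) := inferInstance
  have hPnormal : (P : Subgroup G).Normal := hsyl 2 hp2 P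
  haveI := Sylow.unique_of_normal P hPnormal
  have hcardG : 0 < Nat.card G := Nat.card_pos
  have hcardP : Nat.card (P : Subgroup G) = 2 ^ (Nat.card G).factorization 2 :=
    P.card_eq_multiplicity
  -- H has odd cardinality
  have hHcardpos : 0 < Nat.card H := Nat.card_pos
  have hHodd : Odd (Nat.card H) := by
    by_contra hev
    rw [Nat.not_odd_iff_even] at hev
    obtain ⟨x, hx⟩ := exists_prime_orderOf_dvd_card' (G := H) 2 hev.two_dvd
    have hodd : Odd (orderOf (x : G)) := (hH (x : G)).mp x.2
    rw [Subgroup.orderOf_coe, hx] at hodd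
    exact absurd hodd (by decide)
  -- every 2-element of G lies in P
  have mem_P : ∀ g : G, (∃ k : ℕ, orderOf g ∣ 2 ^ k) → g ∈ P := by
    rintro g ⟨k, hk⟩
    obtain ⟨i, _, hi⟩ := (Nat.dvd_prime_pow Nat.prime_two).mp hk
    have hpg : IsPGroup 2 (Subgroup.zpowers g) :=
      IsPGroup.of_card (n := i) (by rw [Nat.card_zpowers, hi])
    obtain ⟨Q, hQ⟩ := hpg.exists_le_sylow
    have : Q = P := Subsingleton.elim Q P
    exact this ▸ hQ (Subgroup.mem_zpowers g)
  -- odd-order Sylow subgroups are contained in H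
  have hQleH : ∀ (q : ℕ) (_ : Fact q.Prime), q ≠ 2 → ∀ Q : Sylow q G,
      (Q : Subgroup G) ≤ H := by
    intro q hq hq2 Q x hx
    obtain ⟨k, hk⟩ := Q.2 ⟨x, hx⟩
    have hdvd : orderOf x ∣ q ^ k := by
      have := orderOf_dvd_of_pow_eq_one hk
      rwa [Subgroup.orderOf_mk] at this
    obtain ⟨i, _, hoi⟩ := (Nat.dvd_prime_pow hq.out).mp hdvd
    refine (hH x).mpr ?_
    rw [hoi]
    exact (hq.out.odd_of_ne_two hq2).pow
  -- card H equals the odd part of card G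
  have hm : ordCompl[2] (Nat.card G) ∣ Nat.card H := by
    rw [← Nat.factorization_le_iff_dvd (Nat.ordCompl_pos 2 hcardG.ne').ne' hHcardpos.ne',
      Nat.factorization_ordCompl]
    intro q
    rcases eq_or_ne q 2 with rfl | hq2
    · simp
    rw [Finsupp.erase_ne hq2]
    by_cases hq : q.Prime
    · haveI : Fact q.Prime := ⟨hq⟩
      obtain ⟨Q⟩ : Nonempty (Sylow q G) := inferInstance
      have h1' : Nat.card (Q : Subgroup G) ∣ Nat.card H :=
        Subgroup.card_dvd_of_le (hQleH q ⟨hq⟩ hq2 Q)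
      rw [Q.card_eq_multiplicity] at h1'
      exact (Nat.Prime.pow_dvd_iff_le_factorization hq hHcardpos.ne').mp h1'
    · simp [Nat.factorization_eq_zero_of_not_prime _ hq]
  have hHdvd : Nat.card H ∣ ordCompl[2] (Nat.card G) := by
    have hd : Nat.card H ∣ Nat.card G := Subgroup.card_subgroup_dvd_card H
    have hcop : Nat.Coprime (Nat.card H) (2 ^ (Nat.card G).factorization 2) :=
      Nat.Coprime.pow_right _ (Nat.coprime_two_right.mpr hHodd)
    refine hcop.dvd_of_dvd_mul_left ?_
    rwa [Nat.ordProj_mul_ordCompl_eq_self]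
  have hHcard : Nat.card H = ordCompl[2] (Nat.card G) := Nat.dvd_antisymm hHdvd hm
  -- disjointness and the complement property
  have hdisj : Disjoint (P : Subgroup G) H := by
    rw [Subgroup.disjoint_def]
    intro x hxP hxH
    obtain ⟨k, hk⟩ := P.2 ⟨x, hxP⟩
    have hdvd : orderOf x ∣ 2 ^ k := by
      have := orderOf_dvd_of_pow_eq_one hk
      rwa [Subgroup.orderOf_mk] at this
    have hodd : Odd (orderOf x) := (hH x).mp hxH
    have hcop : Nat.Coprime (orderOf x) (2 ^ k) :=
      Nat.Coprime.pow_right _ (Nat.coprime_two_right.mpr hodd)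
    have hone : orderOf x = 1 := Nat.eq_one_of_dvd_coprimes hcop dvd_rfl hdvd
    rwa [orderOf_eq_one_iff] at hone
  have hcardmul : Nat.card (P : Subgroup G) * Nat.card H = Nat.card G := by
    rw [hcardP, hHcard]
    exact Nat.ordProj_mul_ordCompl_eq_self _ 2
  have hcompl : (P : Subgroup G).IsComplement' H :=
    Subgroup.isComplement'_of_card_mul_and_disjoint hcardmul hdisj
  -- elements of P and H commute
  have hcomm : ∀ p : G, p ∈ P → ∀ h : G, h ∈ H → Commute p h := fun p hp h hh =>
    Subgroup.commute_of_normal_of_disjoint _ _ hPnormal hHnormal hdisj p h hp hh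
  -- H is central
  have hHcentral : H ≤ Subgroup.center G := by
    intro h hh
    by_contra hnc
    have hinv : h⁻¹ ∉ Subgroup.center G := fun hc => hnc (by simpa using inv_mem hc)
    obtain ⟨c, hc⟩ := isConj_iff.mp (hOC h h⁻¹ hnc hinv (orderOf_inv h).symm)
    -- hc : c * h * c⁻¹ = h⁻¹
    have hc0 : SemiconjBy c h h⁻¹ := by
      show c * h = h⁻¹ * c
      rw [← hc]; group
    have hc' : c * h⁻¹ = h * c := by simpa using hc0.inv_right.eq
    have hc2 : Commute (c ^ 2) h := by
      show c ^ 2 * h = h * c ^ 2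
      rw [sq, mul_assoc, hc0.eq, ← mul_assoc, hc', mul_assoc]
    have htpos : 0 < orderOf c := orderOf_pos c
    have hmodd : Odd (ordCompl[2] (orderOf c)) := Nat.odd_iff.mpr
      (Nat.two_dvd_ne_zero.mp (Nat.not_dvd_ordCompl Nat.prime_two htpos.ne'))
    obtain ⟨s, hs⟩ := hmodd
    -- c ^ ordCompl[2] (orderOf c) is a 2-element, hence in P
    have hcmP : c ^ ordCompl[2] (orderOf c) ∈ P := by
      apply mem_P
      refine ⟨(orderOf c).factorization 2, orderOf_dvd_of_pow_eq_one ?_⟩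
      rw [← pow_mul, mul_comm (ordCompl[2] (orderOf c)),
        Nat.ordProj_mul_ordCompl_eq_self]
      exact pow_orderOf_eq_one c
    -- it conjugates h to h⁻¹
    have hcm : c ^ ordCompl[2] (orderOf c) * h = h⁻¹ * c ^ ordCompl[2] (orderOf c) := by
      have h2s : (c ^ 2) ^ s * h⁻¹ = h⁻¹ * (c ^ 2) ^ s := (hc2.pow_left s).inv_right
      calc c ^ ordCompl[2] (orderOf c) * h = (c ^ 2) ^ s * (c * h) := by
            rw [hs, pow_succ c (2 * s), pow_mul c 2 s, mul_assoc]
        _ = (c ^ 2) ^ s * (h⁻¹ * c) := by rw [hc0.eq]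
        _ = h⁻¹ * ((c ^ 2) ^ s * c) := by rw [← mul_assoc, h2s, mul_assoc]
        _ = h⁻¹ * c ^ ordCompl[2] (orderOf c) := by rw [hs, pow_succ c (2 * s), pow_mul c 2 s]
    -- but it also commutes with h
    have hcomm' : c ^ ordCompl[2] (orderOf c) * h = h * c ^ ordCompl[2] (orderOf c) :=
      hcomm _ hcmP h hh
    have hinv_eq : h⁻¹ = h := mul_right_cancel (hcm.symm.trans hcomm')
    have hsq : h ^ 2 = 1 := by
      rw [sq]
      nth_rewrite 1 [← hinv_eq]
      exact inv_mul_cancel h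
    have hodd : Odd (orderOf h) := (hH h).mp hh
    have hdvd2 : orderOf h ∣ 2 := orderOf_dvd_of_pow_eq_one hsq
    have hone : orderOf h = 1 := by
      rcases (Nat.dvd_prime Nat.prime_two).mp hdvd2 with h' | h'
      · exact h'
      · rw [h'] at hodd; exact absurd hodd (by decide)
    rw [orderOf_eq_one_iff] at hone
    exact hnc (hone ▸ Subgroup.one_mem _)
  -- first conjunct : H abelian
  have habH : ∀ a b : H, a * b = b * a := by
    intro a b
    have hab := Subgroup.mem_center_iff.mp (hHcentral a.2) (b : G)
    exact Subtype.ext (by push_cast; exact hab.symm)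
  -- P is nonabelian
  have hPnonab : ¬ ∀ a b : (P : Subgroup G), a * b = b * a := by
    intro habs
    apply lt_top_iff_ne_top.mp h2
    rw [Subgroup.eq_top_iff']
    intro g
    rw [Subgroup.mem_center_iff]
    intro x
    obtain ⟨⟨p1, h1'⟩, hg⟩ := hcompl.2 g
    obtain ⟨⟨p2, h2'⟩, hx⟩ := hcompl.2 x
    have hp : Commute (p1 : G) (p2 : G) :=
      congrArg Subtype.val (habs ⟨p1, p1.2⟩ ⟨p2, p2.2⟩)
    have hh1 : ∀ y : G, Commute y (h1' : G) := fun y =>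
      Subgroup.mem_center_iff.mp (hHcentral h1'.2) y
    have hh2 : ∀ y : G, Commute y (h2' : G) := fun y =>
      Subgroup.mem_center_iff.mp (hHcentral h2'.2) y
    have hcgx : Commute (g : G) (x : G) := by
      rw [← hg, ← hx]
      exact Commute.mul_left (hp.mul_right (hh2 (p1 : G)))
        ((hh1 ((p2 : G) * (h2' : G))).symm)
    exact hcgx.symm
  refine ⟨habH, P, hPnonab, hPnormal, hcompl, ?_, ?_, ?_⟩
  · -- P is an OC-group
    intro x y hx hy hord
    have hxG : (x : G) ∉ Subgroup.center G := fun hmem =>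
      hx (Subgroup.mem_center_iff.mpr fun p => Subtype.ext
        (Subgroup.mem_center_iff.mp hmem p))
    have hyG : (y : G) ∉ Subgroup.center G := fun hmem =>
      hy (Subgroup.mem_center_iff.mpr fun p => Subtype.ext
        (Subgroup.mem_center_iff.mp hmem p))
    have hordG : orderOf (x : G) = orderOf (y : G) := by
      rw [Subgroup.orderOf_coe, Subgroup.orderOf_coe, hord]
    obtain ⟨c, hc⟩ := isConj_iff.mp (hOC (x : G) (y : G) hxG hyG hordG)
    obtain ⟨⟨p, h'⟩, hpc⟩ := hcompl.2 c
    have hhcen : ∀ z : G, z * (h' : G) = (h' : G) * z := fun z =>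
      Subgroup.mem_center_iff.mp (hHcentral h'.2) z
    have hconjh : (h' : G) * (x : G) * (h' : G)⁻¹ = (x : G) := by
      rw [← hhcen (x : G), mul_assoc, mul_inv_cancel, mul_one]
    have hkey : (p : G) * (x : G) * (p : G)⁻¹ = (y : G) := by
      calc (p : G) * (x : G) * (p : G)⁻¹
          = (p : G) * ((h' : G) * (x : G) * (h' : G)⁻¹) * (p : G)⁻¹ := by rw [hconjh]
        _ = ((p : G) * (h' : G)) * (x : G) * ((p : G) * (h' : G))⁻¹ := by group
        _ = c * (x : G) * c⁻¹ := by
              have hpc' : (p : G) * (h' : G) = c := hpc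
              rw [hpc']
        _ = y := hc
    refine isConj_iff.mpr ⟨⟨p, p.2⟩, Subtype.ext ?_⟩
    push_cast
    exact hkey
  · -- center of P is nontrivial
    haveI : Nontrivial (P : Subgroup G) := by
      rcases subsingleton_or_nontrivial (P : Subgroup G) with hss | hnt
      · exact absurd (fun a b => Subsingleton.elim _ _) hPnonab
      · exact hnt
    have hnt := P.isPGroup'.center_nontrivial
    exact bot_lt_iff_ne_bot.mpr ((Subgroup.nontrivial_iff_ne_bot _).mp hnt)
  · -- center of P is proper
    rw [lt_top_iff_ne_top]
    intro heq
    apply hPnonab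
    intro a b
    have hmem : a ∈ Subgroup.center (P : Subgroup G) := heq ▸ Subgroup.mem_top a
    exact (Subgroup.mem_center_iff.mp hmem b).symm
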